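/- Let Ω be a topological space, g : Ω × Ω → ℝ a continuous function satisfying (g1) g(r,u) = 0 implies r = u, (g2) |g(r,u)| = |g(u,r)|, and (g3) |g(r,u)| ≤ |g(r,t)| + |g(t,u)| for all r, u, t ∈ Ω, R a binary relation on Ω, and S : Ω → Ω a map such that: (i) Ω is g-R-complete; (ii) R is S-closed; (iii) there exists r₀ ∈ Ω with (r₀, S r₀) ∈ R; (iv) S is g-R-continuous; (v) S is a topologically R-preserving contraction with respect to g, i.e., there exists α ∈ (0,1) with |g(Sx, Sy)| ≤ α |g(x,y)| for all (x,y) ∈ R. Then S has a fixed point; moreover, for each r₀ ∈ Ω with (r₀, S r₀) ∈ R, the Picard sequence {Sⁿ r₀} g-converges to a fixed point of S. -/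

import Mathlib

open Filter

/-- Relation-theoretic Banach contraction principle in a topological space,
with the `g`-`R`-continuity assumption on `S`. -/
theorem relational_BCP_continuous {Ω : Type*} [TopologicalSpace Ω]
    (g : Ω × Ω → ℝ) (hg_cont : Continuous g)
    (hg1 : ∀ r u : Ω, g (r, u) = 0 → r = u)
    (hg2 : ∀ r u : Ω, |g (r, u)| = |g (u, r)|)
    (hg3 : ∀ r u t : Ω, |g (r, u)| ≤ |g (r, t)| + |g (t, u)|)
    (R : Ω → Ω → Prop) (S : Ω → Ω)
    -- (i) Ω is g-R-complete
    (hcomplete : ∀ r : ℕ → Ω, (∀ n, R (r n) (r (n + 1))) →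
      Tendsto (fun p : ℕ × ℕ => |g (r p.1, r p.2)|) atTop (nhds 0) →
      ∃ x : Ω, Tendsto (fun n => |g (r n, x)|) atTop (nhds 0))
    -- (ii) R is S-closed
    (hSclosed : ∀ x y : Ω, R x y → R (S x) (S y))
    -- (iii) Ω(S; R) is nonempty
    (hnonempty : ∃ r₀ : Ω, R r₀ (S r₀))
    -- (iv) S is g-R-continuous
    (hScont : ∀ (r : ℕ → Ω) (x : Ω), (∀ n, R (r n) (r (n + 1))) →
      Tendsto (fun n => |g (r n, x)|) atTop (nhds 0) →
      Tendsto (fun n => |g (S (r n), S x)|) atTop (nhds 0))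
    -- (v) S is a topologically R-preserving contraction w.r.t. g
    (α : ℝ) (hα : α ∈ Set.Ioo (0 : ℝ) 1)
    (hcontr : ∀ x y : Ω, R x y → |g (S x, S y)| ≤ α * |g (x, y)|) :
    (∃ x : Ω, S x = x) ∧
      ∀ r₀ : Ω, R r₀ (S r₀) → ∃ x : Ω, S x = x ∧
        Tendsto (fun n => |g (S^[n] r₀, x)|) atTop (nhds 0) := by
  obtain ⟨hα0, hα1⟩ := hα
  have key : ∀ r₀ : Ω, R r₀ (S r₀) → ∃ x : Ω, S x = x ∧
      Tendsto (fun n => |g (S^[n] r₀, x)|) atTop (nhds 0) := by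
    intro r₀ hr₀
    set r : ℕ → Ω := fun n => S^[n] r₀ with hr
    have hsucc : ∀ n, r (n + 1) = S (r n) := by
      intro n; simp [hr, Function.iterate_succ_apply']
    -- R-preserving
    have hpres : ∀ n, R (r n) (r (n + 1)) := by
      intro n
      induction n with
      | zero => simpa [hr] using hr₀
      | succ k ih => rw [hsucc, hsucc]; exact hSclosed _ _ ih
    set d : ℝ := |g (r 0, r 1)| with hd
    have hd0 : 0 ≤ d := abs_nonneg _
    -- basic contraction estimate
    have hbound : ∀ n, |g (r n, r (n + 1))| ≤ α ^ n * d := by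
      intro n
      induction n with
      | zero => simp [hd]
      | succ k ih =>
        rw [hsucc k, hsucc (k + 1), hsucc k]
        calc |g (S (r k), S (S (r k)))| ≤ α * |g (r k, S (r k))| := by
              have := hcontr _ _ (hpres k)
              rwa [hsucc k] at this
          _ ≤ α * (α ^ k * d) := by
              apply mul_le_mul_of_nonneg_left _ hα0.le
              rwa [hsucc k] at ih
          _ = α ^ (k + 1) * d := by ring
    set C : ℝ := d * (1 - α)⁻¹ with hC
    have hC0 : 0 ≤ C := mul_nonneg hd0 (inv_nonneg.2 (by linarith))
    -- chain bound (for strictly increasing indices)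
    have hchain : ∀ m k, |g (r m, r (m + (k + 1)))| ≤
        (∑ i ∈ Finset.range (k + 1), α ^ (m + i)) * d := by
      intro m k
      induction k with
      | zero => rw [Finset.sum_range_one, Nat.add_zero]; exact hbound m
      | succ k ih =>
        have htri := hg3 (r m) (r (m + (k + 2))) (r (m + (k + 1)))
        have h2 : |g (r (m + (k + 1)), r (m + (k + 2)))| ≤ α ^ (m + (k + 1)) * d :=
          hbound (m + (k + 1))
        calc |g (r m, r (m + (k + 2)))|
            ≤ |g (r m, r (m + (k + 1)))| + |g (r (m + (k + 1)), r (m + (k + 2)))| := htri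
          _ ≤ (∑ i ∈ Finset.range (k + 1), α ^ (m + i)) * d + α ^ (m + (k + 1)) * d :=
              add_le_add ih h2
          _ = (∑ i ∈ Finset.range (k + 2), α ^ (m + i)) * d := by
              rw [Finset.sum_range_succ _ (k + 1), Finset.sum_range_succ _ k]; ring
    have hgeom : ∀ m k, (∑ i ∈ Finset.range k, α ^ (m + i)) * d ≤ α ^ m * C := by
      intro m k
      have h1 : (∑ i ∈ Finset.range k, α ^ (m + i)) = α ^ m * ∑ i ∈ Finset.range k, α ^ i := by
        rw [Finset.mul_sum]; exact Finset.sum_congr rfl fun i _ => by rw [pow_add]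
      have h2 : (∑ i ∈ Finset.range k, α ^ i) ≤ (1 - α)⁻¹ := by
        have h1α : (0:ℝ) < 1 - α := by linarith
        rw [geom_sum_eq (ne_of_lt hα1) k, div_le_iff_of_neg (by linarith : α - 1 < 0)]
        have hcanc : (1 - α) * (1 - α)⁻¹ = 1 := mul_inv_cancel₀ (ne_of_gt h1α)
        nlinarith [pow_nonneg hα0.le k]
      calc (∑ i ∈ Finset.range k, α ^ (m + i)) * d ≤ (α ^ m * (1 - α)⁻¹) * d := by
            rw [h1]
            apply mul_le_mul_of_nonneg_right _ hd0
            exact mul_le_mul_of_nonneg_left h2 (by positivity)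
        _ = α ^ m * C := by rw [hC]; ring
    have hmn : ∀ m n, |g (r m, r n)| ≤ α ^ (min m n) * (C + d) := by
      have base : ∀ m n, m ≤ n → |g (r m, r n)| ≤ α ^ m * (C + d) := by
        intro m n hle
        obtain ⟨k, rfl⟩ := Nat.exists_eq_add_of_le hle
        have htri := hg3 (r m) (r (m + k)) (r (m + k + 1))
        have h1 : |g (r m, r (m + k + 1))| ≤ α ^ m * C := by
          rw [Nat.add_assoc]
          exact (hchain m k).trans (hgeom m (k + 1))
        have h2 : |g (r (m + k + 1), r (m + k))| ≤ α ^ m * d := by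
          rw [hg2]
          refine (hbound (m + k)).trans ?_
          apply mul_le_mul_of_nonneg_right _ hd0
          exact pow_le_pow_of_le_one hα0.le hα1.le (Nat.le_add_right m k)
        calc |g (r m, r (m + k))| ≤ |g (r m, r (m + k + 1))| + |g (r (m + k + 1), r (m + k))| :=
              htri
          _ ≤ α ^ m * C + α ^ m * d := add_le_add h1 h2
          _ = α ^ m * (C + d) := by ring
      intro m n
      rcases le_total m n with h | h
      · simpa [min_eq_left h] using base m n h
      · rw [min_eq_right h, hg2]; exact base n m h
    -- Cauchy
    have hcauchy : Tendsto (fun p : ℕ × ℕ => |g (r p.1, r p.2)|) atTop (nhds 0) := by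
      have hmin : Tendsto (fun p : ℕ × ℕ => min p.1 p.2) atTop atTop := by
        refine tendsto_atTop.2 fun b => ?_
        filter_upwards [Filter.eventually_ge_atTop ((b, b) : ℕ × ℕ)] with p hp
        exact le_min hp.1 hp.2
      have hpow : Tendsto (fun p : ℕ × ℕ => α ^ (min p.1 p.2) * (C + d)) atTop (nhds 0) := by
        have h1 : Tendsto (fun n : ℕ => α ^ n) atTop (nhds 0) :=
          tendsto_pow_atTop_nhds_zero_of_lt_one hα0.le hα1
        have := (h1.comp hmin).mul_const (C + d)
        simpa using this
      exact squeeze_zero (fun p => abs_nonneg _) (fun p => hmn p.1 p.2) hpow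
    obtain ⟨x, hx⟩ := hcomplete r hpres hcauchy
    -- limit is a fixed point
    have hSx : Tendsto (fun n => |g (S (r n), S x)|) atTop (nhds 0) :=
      hScont r x hpres hx
    have hfix : S x = x := by
      have hle : ∀ n, |g (x, S x)| ≤ |g (r (n + 1), x)| + |g (S (r n), S x)| := by
        intro n
        calc |g (x, S x)| ≤ |g (x, r (n + 1))| + |g (r (n + 1), S x)| := hg3 _ _ _
          _ = |g (r (n + 1), x)| + |g (S (r n), S x)| := by rw [hg2, hsucc n]
      have hsum : Tendsto (fun n => |g (r (n + 1), x)| + |g (S (r n), S x)|)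
          atTop (nhds 0) := by
        have h1 : Tendsto (fun n => |g (r (n + 1), x)|) atTop (nhds 0) :=
          hx.comp (tendsto_add_atTop_nat 1)
        simpa using h1.add hSx
      have h0 : |g (x, S x)| ≤ 0 :=
        le_of_tendsto_of_tendsto' tendsto_const_nhds hsum hle
      have : g (x, S x) = 0 := abs_eq_zero.1 (le_antisymm h0 (abs_nonneg _))
      exact (hg1 _ _ this).symm
    exact ⟨x, hfix, hx⟩
  obtain ⟨r₀, hr₀⟩ := hnonempty
  obtain ⟨x, hx, -⟩ := key r₀ hr₀
  exact ⟨⟨x, hx⟩, key⟩
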